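/- Let X be an additive commutative group, p a prime such that the map x ↦ p • x is surjective on X, f : X → ℝ convex, and x ∈ X. For h ∈ X set S(h) = { n * (f(x + g) − f(x)) : n ∈ ℕ, n ≥ 1, g ∈ X, n • g = h } ⊆ ℝ. Then for every h ∈ X the set S(h) is nonempty and bounded below; and the directional derivative f_x(h) := inf S(h) is ℕ-sublinear: f_x(h₁ + h₂) ≤ f_x(h₁) + f_x(h₂) for all h₁, h₂ ∈ X, and f_x(m • h) = m * f_x(h) for every m ∈ ℕ and h ∈ X (in particular f_x(0) = 0). -/

import Mathlib

/-- A real-valued function on an additive commutative monoid is convex. -/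
def RConvexFn {X : Type*} [AddCommMonoid X] (f : X → ℝ) : Prop :=
  ∀ (n : ℕ), 0 < n → ∀ m : Fin n → ℕ, (∀ i, 0 < m i) →
    ∀ (xs : Fin n → X) (x : X), (∑ i, m i) • x = ∑ i, m i • xs i →
      ((∑ i, m i : ℕ) : ℝ) * f x ≤ ∑ i, (m i : ℝ) * f (xs i)

/-- The set `S(h) = { n * (f(x+g) − f(x)) : n ≥ 1, n • g = h }`. -/
def dirSet {X : Type*} [AddCommGroup X] (f : X → ℝ) (x h : X) : Set ℝ :=
  {r : ℝ | ∃ (n : ℕ) (g : X), 1 ≤ n ∧ n • g = h ∧ r = (n : ℝ) * (f (x + g) - f x)}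

/-- The directional derivative `f_x(h) = inf S(h)`. -/
noncomputable def dirDeriv {X : Type*} [AddCommGroup X] (f : X → ℝ) (x h : X) : ℝ :=
  sInf (dirSet f x h)

section Aux
variable {X : Type*} [AddCommGroup X] {f : X → ℝ}

lemma rc1 (hf : RConvexFn f) {a : ℕ} (ha : 0 < a) {w y : X}
    (h : a • w = a • y) : f w ≤ f y := by
  have h2 := hf 1 one_pos ![a] (fun i => by fin_cases i; simpa) ![y] w (by simpa using h)
  simp at h2
  have ha' : (0:ℝ) < a := by exact_mod_cast ha
  exact le_of_mul_le_mul_left h2 ha'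

lemma rc2 (hf : RConvexFn f) {a b : ℕ} (ha : 0 < a) (hb : 0 < b) {w y z : X}
    (h : (a + b) • w = a • y + b • z) :
    ((a:ℝ) + (b:ℝ)) * f w ≤ (a:ℝ) * f y + (b:ℝ) * f z := by
  have h2 := hf 2 two_pos ![a, b] (fun i => by fin_cases i <;> simpa) ![y, z] w
    (by simpa [Fin.sum_univ_two] using h)
  simpa [Fin.sum_univ_two] using h2

lemma rc3 (hf : RConvexFn f) {a b c : ℕ} (ha : 0 < a) (hb : 0 < b) (hc : 0 < c) {w y z u : X}
    (h : (a + b + c) • w = a • y + b • z + c • u) :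
    ((a:ℝ) + (b:ℝ) + (c:ℝ)) * f w ≤ (a:ℝ) * f y + (b:ℝ) * f z + (c:ℝ) * f u := by
  have h2 := hf 3 (by norm_num) ![a, b, c] (fun i => by fin_cases i <;> simpa) ![y, z, u] w
    (by simpa [Fin.sum_univ_three] using h)
  simpa [Fin.sum_univ_three] using h2

lemma pk_div {p : ℕ} (hdiv : Function.Surjective fun x : X => p • x) (k : ℕ) (h : X) :
    ∃ g : X, p ^ k • g = h := by
  induction k generalizing h with
  | zero => exact ⟨h, by simp⟩
  | succ k ih =>
      obtain ⟨g, hg⟩ := hdiv h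
      simp only at hg
      obtain ⟨u, hu⟩ := ih g
      exact ⟨u, by rw [pow_succ', mul_smul, hu, hg]⟩

end Aux


/-- For a convex real-valued function on a `p`-semidivisible group, each set `S(h)` is nonempty
and bounded below, and the directional derivative `f_x` is ℕ-sublinear: subadditive,
positively homogeneous over ℕ, and `f_x(0) = 0`. -/
theorem dirDeriv_nsublinear {X : Type*} [AddCommGroup X] (p : ℕ) (hp : p.Prime)
    (hdiv : Function.Surjective fun x : X => p • x)
    (f : X → ℝ) (hf : RConvexFn f) (x : X) :
    (∀ h : X, (dirSet f x h).Nonempty ∧ BddBelow (dirSet f x h)) ∧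
    (∀ h₁ h₂ : X, dirDeriv f x (h₁ + h₂) ≤ dirDeriv f x h₁ + dirDeriv f x h₂) ∧
    (∀ (m : ℕ) (h : X), dirDeriv f x (m • h) = (m : ℝ) * dirDeriv f x h) ∧
    dirDeriv f x 0 = 0 := by
  have hdivk : ∀ (k : ℕ) (h : X), ∃ g : X, p ^ k • g = h := pk_div hdiv
  -- nonempty
  have hne : ∀ h : X, (dirSet f x h).Nonempty := by
    intro h
    obtain ⟨g, hg⟩ := hdivk 1 h
    exact ⟨((p^1 : ℕ):ℝ) * (f (x + g) - f x), p ^ 1, g, Nat.one_le_pow _ _ hp.pos, hg, rfl⟩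
  -- bounded below
  have hbdd : ∀ h : X, BddBelow (dirSet f x h) := by
    intro h
    obtain ⟨g', hg'⟩ := hdivk 1 (-h)
    refine ⟨-(((p^1 : ℕ):ℝ) * (f (x + g') - f x)), ?_⟩
    rintro r ⟨n, g, hn, hg, rfl⟩
    have key : (n + p ^ 1) • x = n • (x + g) + p ^ 1 • (x + g') := by
      rw [smul_add, smul_add, hg, hg', add_smul]; abel
    have h2 := rc2 hf (by omega) (pow_pos hp.pos 1) key
    nlinarith [h2]
  -- subadditivity against elements
  have hsub : ∀ h₁ h₂ : X, ∀ r₁ ∈ dirSet f x h₁, ∀ r₂ ∈ dirSet f x h₂,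
      dirDeriv f x (h₁ + h₂) ≤ r₁ + r₂ := by
    rintro h₁ h₂ r₁ ⟨n₁, g₁, hn₁, hg₁, rfl⟩ r₂ ⟨n₂, g₂, hn₂, hg₂, rfl⟩
    have hk : n₁ + n₂ < p ^ (n₁ + n₂) :=
      lt_of_lt_of_le Nat.lt_two_pow_self (Nat.pow_le_pow_left hp.two_le _)
    obtain ⟨g, hg⟩ := hdivk (n₁ + n₂) (h₁ + h₂)
    obtain ⟨c, hcpos, hc⟩ : ∃ c, 0 < c ∧ p ^ (n₁ + n₂) = n₁ + n₂ + c :=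
      ⟨p ^ (n₁ + n₂) - (n₁ + n₂), by omega, by omega⟩
    rw [hc] at hg
    have key : (n₁ + n₂ + c) • (x + g) = n₁ • (x + g₁) + n₂ • (x + g₂) + c • x := by
      rw [smul_add, hg, smul_add, smul_add, hg₁, hg₂, add_smul, add_smul]; abel
    have h3 := rc3 hf (by omega) (by omega) hcpos key
    have mem : ((n₁ + n₂ + c : ℕ):ℝ) * (f (x + g) - f x) ∈ dirSet f x (h₁ + h₂) :=
      ⟨_, g, by omega, hg, rfl⟩
    have hle : dirDeriv f x (h₁ + h₂) ≤ ((n₁ + n₂ + c : ℕ):ℝ) * (f (x + g) - f x) :=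
      csInf_le (hbdd _) mem
    push_cast at hle
    nlinarith [h3, hle]
  have hsubd : ∀ h₁ h₂ : X, dirDeriv f x (h₁ + h₂) ≤ dirDeriv f x h₁ + dirDeriv f x h₂ := by
    intro h₁ h₂
    have h1 : dirDeriv f x (h₁ + h₂) - dirDeriv f x h₂ ≤ dirDeriv f x h₁ := by
      apply le_csInf (hne h₁)
      intro r₁ hr₁
      have h2 : dirDeriv f x (h₁ + h₂) - r₁ ≤ dirDeriv f x h₂ :=
        le_csInf (hne h₂) fun r₂ hr₂ => by linarith [hsub h₁ h₂ r₁ hr₁ r₂ hr₂]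
      linarith
    linarith
  -- zero
  have h0 : dirDeriv f x 0 = 0 := by
    have mem : (0:ℝ) ∈ dirSet f x 0 := ⟨1, 0, le_refl 1, by simp, by simp⟩
    refine le_antisymm (csInf_le (hbdd 0) mem) (le_csInf (hne 0) ?_)
    rintro r ⟨n, g, hn, hg, rfl⟩
    have hfx : f x ≤ f (x + g) :=
      rc1 hf (show 0 < n by omega) (show n • x = n • (x + g) by rw [smul_add, hg, add_zero])
    have hn' : (0:ℝ) ≤ n := by positivity
    nlinarith [hfx]
  refine ⟨fun h => ⟨hne h, hbdd h⟩, hsubd, ?_, h0⟩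
  intro m h
  rcases Nat.eq_zero_or_pos m with hm | hm
  · subst hm; simpa using h0
  have hm' : (0:ℝ) < m := by exact_mod_cast hm
  apply le_antisymm
  · -- inf S(m h) ≤ m * inf S h
    have hdd : dirDeriv f x (m • h) / m ≤ dirDeriv f x h := by
      apply le_csInf (hne h)
      rintro r ⟨n, g, hn, hg, rfl⟩
      rw [div_le_iff₀ hm']
      have mem : ((m * n : ℕ):ℝ) * (f (x + g) - f x) ∈ dirSet f x (m • h) :=
        ⟨m * n, g, Nat.mul_pos hm (by omega), by rw [mul_smul, hg], rfl⟩
      have hle : dirDeriv f x (m • h) ≤ ((m * n : ℕ):ℝ) * (f (x + g) - f x) :=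
        csInf_le (hbdd _) mem
      push_cast at hle
      nlinarith [hle]
    rw [div_le_iff₀ hm'] at hdd
    linarith
  · -- m * inf S h ≤ inf S(m h)
    apply le_csInf (hne (m • h))
    rintro s ⟨n, g, hn, hg, rfl⟩
    have hk : n < m * p ^ n :=
      lt_of_lt_of_le (lt_of_lt_of_le Nat.lt_two_pow_self (Nat.pow_le_pow_left hp.two_le _))
        (Nat.le_mul_of_pos_left _ hm)
    obtain ⟨u, hu⟩ := hdivk n h
    obtain ⟨c, hcpos, hc⟩ : ∃ c, 0 < c ∧ m * p ^ n = n + c := ⟨m * p ^ n - n, by omega, by omega⟩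
    have hu' : (n + c) • u = n • g := by
      rw [← hc, mul_smul, hu, hg]
    have key : (n + c) • (x + u) = n • (x + g) + c • x := by
      rw [smul_add, hu', smul_add, add_smul]; abel
    have h2 := rc2 hf (by omega) hcpos key
    have tmem : ((p ^ n : ℕ):ℝ) * (f (x + u) - f x) ∈ dirSet f x h :=
      ⟨p ^ n, u, Nat.one_le_pow _ _ hp.pos, hu, rfl⟩
    have t_le : dirDeriv f x h ≤ ((p ^ n : ℕ):ℝ) * (f (x + u) - f x) := csInf_le (hbdd h) tmem
    have hcast : (m:ℝ) * ((p ^ n : ℕ):ℝ) = (n:ℝ) + (c:ℝ) := by exact_mod_cast hc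
    calc (m:ℝ) * dirDeriv f x h
        ≤ (m:ℝ) * (((p ^ n : ℕ):ℝ) * (f (x + u) - f x)) :=
          mul_le_mul_of_nonneg_left t_le hm'.le
      _ = ((n:ℝ) + (c:ℝ)) * (f (x + u) - f x) := by rw [← mul_assoc, hcast]
      _ ≤ (n:ℝ) * (f (x + g) - f x) := by nlinarith [h2]
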